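/- For the positive-part threshold η(u;λσ) = max(u − λσ, 0) applied to X + (σ/√δ)Z with Z ~ N(0,1) independent of X ≥ 0, P(X=0) = 1−ε, P(X = x*) = ε for fixed x* > 0: the limit as σ ↓ 0 of the derivative dΨ/dσ² equals (1/δ + λ²)ε + (1/δ + λ²)(1−ε)Φ(−λ√δ) − (λ/√δ)(1−ε)φ(−λ√δ). -/

import Mathlib

open Filter Topology

noncomputable def gaussPhi (z : ℝ) : ℝ := Real.exp (-z ^ 2 / 2) / Real.sqrt (2 * Real.pi)

noncomputable def gaussPhiCDF (z : ℝ) : ℝ := ∫ t in Set.Iic z, gaussPhi t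

lemma gaussPhi_integrable : MeasureTheory.Integrable gaussPhi := by
  have h : MeasureTheory.Integrable (fun t : ℝ => Real.exp (-(1/2 : ℝ) * t ^ 2)) :=
    integrable_exp_neg_mul_sq (by norm_num)
  have := h.div_const (Real.sqrt (2 * Real.pi))
  convert this using 2 with t
  unfold gaussPhi
  ring_nf

lemma gaussPhi_integral : ∫ t, gaussPhi t = 1 := by
  unfold gaussPhi
  rw [MeasureTheory.integral_div]
  have : ∫ t : ℝ, Real.exp (-t ^ 2 / 2) = ∫ t : ℝ, Real.exp (-(1/2 : ℝ) * t ^ 2) := by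
    congr 1; funext t; ring_nf
  rw [this, integral_gaussian]
  rw [div_eq_one_iff_eq (by positivity)]
  ring

lemma gaussPhiCDF_tendsto_one : Tendsto gaussPhiCDF atTop (𝓝 1) := by
  have h := MeasureTheory.tendsto_setIntegral_of_monotone (μ := MeasureTheory.volume)
    (f := gaussPhi) (s := fun z : ℝ => Set.Iic z)
    (fun z => measurableSet_Iic) (fun a b hab => Set.Iic_subset_Iic.mpr hab)
    (by rw [Set.iUnion_Iic]; exact gaussPhi_integrable.integrableOn)
  rw [Set.iUnion_Iic, MeasureTheory.Measure.restrict_univ, gaussPhi_integral] at h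
  exact h

lemma gaussPhi_tendsto_zero : Tendsto gaussPhi atTop (𝓝 0) := by
  have h1 : Tendsto (fun z : ℝ => -z ^ 2 / 2) atTop atBot := by
    apply Tendsto.atBot_div_const (by norm_num)
    exact tendsto_neg_atTop_atBot.comp (tendsto_pow_atTop (by norm_num))
  have h2 : Tendsto (fun z : ℝ => Real.exp (-z ^ 2 / 2)) atTop (𝓝 0) :=
    Real.tendsto_exp_atBot.comp h1
  have := h2.div_const (Real.sqrt (2 * Real.pi))
  rw [zero_div] at this
  exact this

theorem positive_case_deriv_limit (δ lam xstar ε : ℝ)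
    (hδ : 0 < δ) (hlam : 0 < lam) (hx : 0 < xstar) (hε : ε ∈ Set.Ioo (0:ℝ) 1) :
    Filter.Tendsto
      (fun σ : ℝ =>
        (1 / δ + lam ^ 2) *
            ((1 - ε) * gaussPhiCDF ((Real.sqrt δ / σ) * (0 - lam * σ))
              + ε * gaussPhiCDF ((Real.sqrt δ / σ) * (xstar - lam * σ)))
          - (lam / Real.sqrt δ) *
            ((1 - ε) * gaussPhi ((Real.sqrt δ / σ) * (0 - lam * σ))
              + ε * gaussPhi ((Real.sqrt δ / σ) * (xstar - lam * σ))))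
      (nhdsWithin 0 (Set.Ioi 0))
      (nhds ((1 / δ + lam ^ 2) * ε
        + (1 / δ + lam ^ 2) * (1 - ε) * gaussPhiCDF (-(lam * Real.sqrt δ))
        - (lam / Real.sqrt δ) * (1 - ε) * gaussPhi (-(lam * Real.sqrt δ)))) := by
  obtain ⟨hε0, hε1⟩ := hε
  have hsδ : 0 < Real.sqrt δ := Real.sqrt_pos.mpr hδ
  -- the argument at xstar tends to atTop
  have harg : Tendsto (fun σ : ℝ => (Real.sqrt δ / σ) * (xstar - lam * σ))
      (𝓝[>] 0) atTop := by
    have hinv : Tendsto (fun σ : ℝ => σ⁻¹) (𝓝[>] (0:ℝ)) atTop := tendsto_inv_nhdsGT_zero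
    have h1 : Tendsto (fun σ : ℝ => Real.sqrt δ * xstar * σ⁻¹) (𝓝[>] (0:ℝ)) atTop :=
      hinv.const_mul_atTop (by positivity)
    have h2 : Tendsto (fun σ : ℝ => Real.sqrt δ * xstar * σ⁻¹ - Real.sqrt δ * lam)
        (𝓝[>] (0:ℝ)) atTop := h1.atTop_add tendsto_const_nhds
    apply h2.congr'
    filter_upwards [self_mem_nhdsWithin] with σ (hσ : 0 < σ)
    field_simp
  have hCDFx : Tendsto (fun σ : ℝ => gaussPhiCDF ((Real.sqrt δ / σ) * (xstar - lam * σ)))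
      (𝓝[>] 0) (𝓝 1) := gaussPhiCDF_tendsto_one.comp harg
  have hPhix : Tendsto (fun σ : ℝ => gaussPhi ((Real.sqrt δ / σ) * (xstar - lam * σ)))
      (𝓝[>] 0) (𝓝 0) := gaussPhi_tendsto_zero.comp harg
  -- the argument at 0 is constantly -(lam * √δ)
  have hzero : ∀ᶠ σ in 𝓝[>] (0:ℝ),
      (Real.sqrt δ / σ) * ((0:ℝ) - lam * σ) = -(lam * Real.sqrt δ) := by
    filter_upwards [self_mem_nhdsWithin] with σ (hσ : 0 < σ)
    field_simp
    ring
  have hCDF0 : Tendsto (fun σ : ℝ => gaussPhiCDF ((Real.sqrt δ / σ) * (0 - lam * σ)))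
      (𝓝[>] 0) (𝓝 (gaussPhiCDF (-(lam * Real.sqrt δ)))) := by
    apply tendsto_const_nhds.congr'
    filter_upwards [hzero] with σ h
    rw [h]
  have hPhi0 : Tendsto (fun σ : ℝ => gaussPhi ((Real.sqrt δ / σ) * (0 - lam * σ)))
      (𝓝[>] 0) (𝓝 (gaussPhi (-(lam * Real.sqrt δ)))) := by
    apply tendsto_const_nhds.congr'
    filter_upwards [hzero] with σ h
    rw [h]
  have := (((hCDF0.const_mul (1 - ε)).add (hCDFx.const_mul ε)).const_mul
      (1 / δ + lam ^ 2)).sub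
    (((hPhi0.const_mul (1 - ε)).add (hPhix.const_mul ε)).const_mul (lam / Real.sqrt δ))
  convert this using 2
  ring
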